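/- Let f(λ) = D(μ^λ - 1) with D > 0 and μ ≥ 4. If the online algorithm only caches a content of size r when the saving s satisfies s ≥ (r/D)·f(λ), and s ≤ nTF·r always holds (assumption A1 upper bound), and μ = 2(nTF+1), then after any sequence of accepted contents the relative load λ never exceeds 1. -/

import Mathlib

/-- Single-node Proposition 2: under the strict acceptance rule
`s_j > (r_j/D)·f(λ_j)` with `f(λ) = D(μ^λ - 1)`, `μ = 2(nTF+1)`,
`r_j ≤ D/log2 μ`, `r_j ≤ s_j ≤ nTF·r_j`, the relative load never exceeds 1. -/
theorem stmt_12 (D μ F : ℝ) (n T : ℕ) (hD : 0 < D) (hn : 0 < n) (hT : 0 < T)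
    (hF : 1 ≤ F) (hμ : μ = 2 * ((n : ℝ) * T * F + 1)) (N : ℕ) (r s : ℕ → ℝ)
    (hr : ∀ j, 0 < r j) (hrD : ∀ j, r j ≤ D / Real.logb 2 μ)
    (hs1 : ∀ j, r j ≤ s j) (hs2 : ∀ j, s j ≤ (n : ℝ) * T * F * r j)
    (hacc : ∀ j < N, s j >
      (r j / D) * (D * (μ ^ ((∑ k ∈ Finset.range j, r k) / D) - 1))) :
    (∑ k ∈ Finset.range N, r k) / D ≤ 1 := by
  have hP : (1:ℝ) ≤ (n : ℝ) * T * F := by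
    have hn1 : (1:ℝ) ≤ (n:ℝ) := by exact_mod_cast hn
    have hT1 : (1:ℝ) ≤ (T:ℝ) := by exact_mod_cast hT
    have h12 : (1:ℝ) ≤ (n:ℝ)*T := by nlinarith
    nlinarith
  have hμ4 : (4:ℝ) ≤ μ := by rw [hμ]; linarith
  have hμpos : (0:ℝ) < μ := by linarith
  have hμ1 : (1:ℝ) < μ := by linarith
  have hL : 0 < Real.logb 2 μ := Real.logb_pos one_lt_two hμ1
  induction N with
  | zero => simp
  | succ N ih =>
    have hIH : (∑ k ∈ Finset.range N, r k) / D ≤ 1 :=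
      ih (fun j hj => hacc j (Nat.lt_succ_of_lt hj))
    by_contra hcon
    push_neg at hcon
    set lam := (∑ k ∈ Finset.range N, r k) / D with hlam
    have hsum : (∑ k ∈ Finset.range (N+1), r k) = (∑ k ∈ Finset.range N, r k) + r N :=
      Finset.sum_range_succ r N
    have hcon' : 1 < lam + r N / D := by
      rw [hlam]
      have := hcon
      rw [hsum] at this
      rw [add_div] at this
      linarith
    have hrND : r N / D ≤ 1 / Real.logb 2 μ := by
      have := hrD N
      have h := hrD N
      rw [le_div_iff₀ hL] at h
      rw [div_le_div_iff₀ hD hL]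
      linarith
    have hexp : 1 - 1 / Real.logb 2 μ ≤ lam := by linarith
    have hkey : μ ^ (1 - 1 / Real.logb 2 μ) = μ / 2 := by
      rw [Real.rpow_sub hμpos, Real.rpow_one]
      have h1 : (1:ℝ) / Real.logb 2 μ = Real.logb μ 2 := by
        rw [Real.logb, Real.logb, one_div_div]
      rw [h1, Real.rpow_logb hμpos (by linarith) (by norm_num)]
    have hmono : μ / 2 ≤ μ ^ lam := by
      rw [← hkey]
      exact Real.rpow_le_rpow_of_exponent_le (le_of_lt hμ1) hexp
    have haccN := hacc N (Nat.lt_succ_self N)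
    have hrNpos := hr N
    have hcost : (r N / D) * (D * (μ ^ lam - 1)) ≥ r N * ((n : ℝ) * T * F) := by
      have h2 : μ / 2 - 1 = (n : ℝ) * T * F := by rw [hμ]; ring
      have : (r N / D) * (D * (μ ^ lam - 1)) = r N * (μ ^ lam - 1) := by
        field_simp
      rw [this]
      nlinarith
    have := hs2 N
    rw [← hlam] at haccN
    nlinarith
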